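/- Let G be the complete directed graph on the 2n + 1 vertices {s, x₁, y₁, …, xₙ, yₙ}, and for i ∈ {1,…,n} let eᵢ denote the edge (xᵢ, yᵢ). Let Q be a valid relaxation sequence for G, let R be the sequence obtained from Q by deleting every occurrence of every eᵢ, let T = (t₁, …, t_m) be a sequence over {1, …, n}, and let S be the concatenation R · (e_{t₁}) · R · (e_{t₂}) · ⋯ · R · (e_{t_m}) · R. If every permutation of {1, …, n} is a subsequence of T, then S is a valid relaxation sequence for G. -/

import Mathlib

/-- The vertex set `{s, x₁, y₁, …, xₙ, yₙ}` of size `2n + 1`: the source is `none`,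
`xᵢ = some (Sum.inl i)` and `yᵢ = some (Sum.inr i)`. -/
abbrev Vtx (n : ℕ) := Option (Fin n ⊕ Fin n)

/-- The special edge `eᵢ = (xᵢ, yᵢ)`. -/
def specialEdge {n : ℕ} (i : Fin n) : Vtx n × Vtx n :=
  (some (Sum.inl i), some (Sum.inr i))

/-- `S` is a valid relaxation sequence for the complete directed graph on vertex
type `α` with source `s`: `S` contains (as a subsequence, in order but not
necessarily contiguously) the edge sequence of every simple path starting at `s`. -/
def IsValidRelaxSeq {α : Type*} (s : α) (S : List (α × α)) : Prop :=
  ∀ p : List α, p ≠ [] → p.head? = some s → p.Nodup → (p.zip p.tail).Sublist S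


lemma specialEdge_injective {n : ℕ} : Function.Injective (specialEdge (n := n)) := by
  intro i j h
  simpa [specialEdge] using h

noncomputable def idx? {n : ℕ} (f : Vtx n × Vtx n) : Option (Fin n) :=
  open scoped Classical in
  if h : ∃ i, f = specialEdge i then some h.choose else none

lemma idx?_eq_some {n : ℕ} {f : Vtx n × Vtx n} {i : Fin n} (h : idx? f = some i) :
    f = specialEdge i := by
  unfold idx? at h
  split at h
  · next hex =>
    obtain ⟨rfl⟩ := Option.some_injective _ h
    exact hex.choose_spec
  · exact absurd h (by simp)

lemma idx?_specialEdge {n : ℕ} (i : Fin n) : idx? (specialEdge i) = some i := by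
  unfold idx?
  split
  · next hex =>
    exact congrArg some (specialEdge_injective hex.choose_spec.symm)
  · next hex => exact absurd ⟨i, rfl⟩ hex

lemma idx?_eq_none {n : ℕ} {f : Vtx n × Vtx n} (h : ∀ i : Fin n, f ≠ specialEdge i) :
    idx? f = none := by
  rcases hi : idx? f with _ | i
  · rfl
  · exact absurd (idx?_eq_some hi) (h i)

lemma cons_sublist_split {α : Type*} {a : α} {l l' : List α} (h : (a :: l).Sublist l') :
    ∃ l₁ l₂, l' = l₁ ++ a :: l₂ ∧ l.Sublist l₂ := by
  induction l' with
  | nil => simp at h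
  | cons b l' ih =>
    cases h with
    | cons _ h =>
      obtain ⟨l₁, l₂, rfl, hl⟩ := ih h
      exact ⟨b :: l₁, l₂, rfl, hl⟩
    | cons_cons _ h => exact ⟨[], l', rfl, h⟩

lemma exists_perm_sublist {n : ℕ} {L : List (Fin n)} (hL : L.Nodup) :
    ∃ π : Equiv.Perm (Fin n), L.Sublist (List.ofFn fun i => π i) := by
  classical
  set M := L ++ (List.finRange n).filter (· ∉ L) with hM
  have hsub : L.Sublist M := List.sublist_append_left _ _
  have hnodup : M.Nodup := by
    refine List.Nodup.append hL ((List.nodup_finRange n).filter _) ?_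
    intro x hx hx'
    simp only [List.mem_filter, decide_eq_true_eq] at hx'
    exact hx'.2 hx
  have hmem : ∀ x : Fin n, x ∈ M := by
    intro x
    by_cases h : x ∈ L
    · exact List.mem_append_left _ h
    · exact List.mem_append_right _ (by simp [List.mem_filter, h])
  have hperm : M.Perm (List.finRange n) :=
    (List.perm_ext_iff_of_nodup hnodup (List.nodup_finRange n)).2
      (fun x => by simp [hmem x, List.mem_finRange])
  have hlen : M.length = n := by simpa using hperm.length_eq
  set g : Fin n → Fin n := fun i => M.get (Fin.cast hlen.symm i) with hg
  have hginj : Function.Injective g := by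
    intro a b hab
    have := (List.nodup_iff_injective_get).1 hnodup hab
    exact Fin.ext (by simpa using congrArg Fin.val this)
  have hgbij : Function.Bijective g := Finite.injective_iff_bijective.1 hginj
  refine ⟨Equiv.ofBijective g hgbij, ?_⟩
  have hofn : (List.ofFn fun i => (Equiv.ofBijective g hgbij) i) = M := by
    apply List.ext_get (by simp [hlen])
    intro i h1 h2
    simp [List.get_ofFn, hg, Equiv.ofBijective]
  rw [hofn]
  exact hsub

lemma flatten_shift {n : ℕ} (R : List (Vtx n × Vtx n)) :
    ∀ T : List (Fin n),
      (T.map fun t => R ++ [specialEdge t]).flatten ++ R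
        = R ++ (T.map fun t => specialEdge t :: R).flatten
  | [] => by simp
  | t :: T => by
    simp only [List.map_cons, List.flatten_cons, List.append_assoc]
    rw [flatten_shift R T]
    simp

lemma key {n : ℕ} (C : List (Vtx n × Vtx n)) :
    ∀ (E : List (Vtx n × Vtx n)) (T : List (Fin n)) (C' : List (Vtx n × Vtx n)),
      C'.Sublist C →
      (E.filter fun f => decide (∀ i : Fin n, f ≠ specialEdge i)).Sublist C' →
      (E.filterMap idx?).Sublist T →
      E.Sublist (C' ++ (T.map fun t => specialEdge t :: C).flatten)
  | [], T, C', _, _, _ => List.nil_sublist _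
  | f :: E, T, C', hC'C, hfil, hfm => by
    by_cases hf : ∀ i : Fin n, f ≠ specialEdge i
    · rw [List.filter_cons_of_pos (by simpa using hf)] at hfil
      rw [List.filterMap_cons_none (idx?_eq_none hf)] at hfm
      obtain ⟨C₁, C₂, rfl, hE⟩ := cons_sublist_split hfil
      have hC₂C : C₂.Sublist C :=
        ((List.sublist_cons_self f C₂).trans (List.sublist_append_right C₁ _)).trans hC'C
      have ih := key C E T C₂ hC₂C hE hfm
      have : (f :: E).Sublist (f :: (C₂ ++ (T.map fun t => specialEdge t :: C).flatten)) :=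
        ih.cons₂ f
      have h2 := (List.nil_sublist C₁).append this
      simpa [List.append_assoc] using h2
    · push_neg at hf
      obtain ⟨i, rfl⟩ := hf
      rw [List.filter_cons_of_neg (by simp)] at hfil
      rw [List.filterMap_cons_some (idx?_specialEdge i)] at hfm
      obtain ⟨T₁, T₂, rfl, hT₂⟩ := cons_sublist_split hfm
      have ih := key C E T₂ C (List.Sublist.refl C) (hfil.trans hC'C) hT₂
      have h1 : (specialEdge i :: E).Sublist
          (specialEdge i :: (C ++ (T₂.map fun t => specialEdge t :: C).flatten)) :=
        ih.cons₂ _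
      have h2 := (List.nil_sublist (C' ++ (T₁.map fun t => specialEdge t :: C).flatten)).append h1
      simpa [List.append_assoc] using h2


/-- If `Q` is a valid relaxation sequence, `R` is `Q` with every occurrence of every
special edge `eᵢ` deleted, `S = R·(e_{t₁})·R·(e_{t₂})⋯R·(e_{t_m})·R`, and every
permutation of `{1, …, n}` is a subsequence of `T = (t₁, …, t_m)`, then `S` is a
valid relaxation sequence. -/
theorem stmt_14 (n : ℕ) (Q : List (Vtx n × Vtx n))
    (hQe : ∀ f ∈ Q, f.1 ≠ f.2)
    (hQ : IsValidRelaxSeq (none : Vtx n) Q)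
    (R : List (Vtx n × Vtx n))
    (hR : R = Q.filter fun f => decide (∀ i : Fin n, f ≠ specialEdge i))
    (T : List (Fin n))
    (S : List (Vtx n × Vtx n))
    (hS : S = (T.map fun t => R ++ [specialEdge t]).flatten ++ R)
    (hT : ∀ π : Equiv.Perm (Fin n), (List.ofFn fun i => π i).Sublist T) :
    IsValidRelaxSeq (none : Vtx n) S := by
  intro p hne hhead hnodup
  set E := p.zip p.tail with hE
  have hEQ : E.Sublist Q := hQ p hne hhead hnodup
  have hfilter : (E.filter fun f => decide (∀ i : Fin n, f ≠ specialEdge i)).Sublist R := by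
    rw [hR]; exact hEQ.filter _
  have hsnd : E.map Prod.snd = p.tail :=
    List.map_snd_zip (by simp)
  have hEnodup : E.Nodup := by
    have : (E.map Prod.snd).Nodup := by rw [hsnd]; exact hnodup.tail
    exact this.of_map _
  have hLnodup : (E.filterMap idx?).Nodup := by
    refine List.Nodup.filterMap ?_ hEnodup
    intro a a' b ha ha'
    rw [idx?_eq_some ha, idx?_eq_some ha']
  obtain ⟨π, hπ⟩ := exists_perm_sublist hLnodup
  have hLT : (E.filterMap idx?).Sublist T := hπ.trans (hT π)
  have := key R E T R (List.Sublist.refl R) hfilter hLT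
  rw [hS, flatten_shift R T]
  exact this
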